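/- Let g₁, g₂ ∈ ℝ[x₁,…,xₙ] be homogeneous polynomials of the same degree d, each with compact sublevel set. If the Lebesgue moments of orders d and 2d of {x : g₁(x) ≤ 1} and {x : g₂(x) ≤ 1} coincide, then g₁ = g₂ (in particular the two sublevel sets are equal). -/

import Mathlib

open MeasureTheory Pointwise

lemma homog_eval_smul {n d : ℕ} {g : MvPolynomial (Fin n) ℝ} (hg : g.IsHomogeneous d)
    (r : ℝ) (x : Fin n → ℝ) :
    MvPolynomial.eval (r • x) g = r ^ d * MvPolynomial.eval x g := by
  rw [MvPolynomial.eval_eq', MvPolynomial.eval_eq', Finset.mul_sum]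
  refine Finset.sum_congr rfl fun α hα => ?_
  have hdeg : ∑ i, α i = d := by
    have := hg (MvPolynomial.mem_support_iff.mp hα)
    rw [Finsupp.weight_apply, Finsupp.sum_fintype] at this
    · simpa using this
    · intro i; simp
  have : ∏ i, (r • x) i ^ α i = r ^ d * ∏ i, x i ^ α i := by
    simp only [Pi.smul_apply, smul_eq_mul, mul_pow]
    rw [Finset.prod_mul_distrib, Finset.prod_pow_eq_pow_sum, hdeg]
  rw [this]; ring

lemma homog_nonneg {n d : ℕ} (hd : 0 < d) {g : MvPolynomial (Fin n) ℝ} (hg : g.IsHomogeneous d)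
    (hK : IsCompact {x : Fin n → ℝ | MvPolynomial.eval x g ≤ 1}) (x : Fin n → ℝ) :
    0 ≤ MvPolynomial.eval x g := by
  by_contra hneg
  push_neg at hneg
  have hx0 : x ≠ 0 := by
    rintro rfl
    have h := homog_eval_smul hg 0 0
    rw [smul_zero, zero_pow hd.ne', zero_mul] at h
    rw [h] at hneg
    exact absurd hneg (by norm_num)
  obtain ⟨R, hR⟩ := hK.isBounded.subset_ball 0
  set t : ℝ := (|R| + 1) / ‖x‖ with ht
  have hxn : 0 < ‖x‖ := norm_pos_iff.mpr hx0
  have htpos : 0 < t := by positivity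
  have hmem : t • x ∈ {y : Fin n → ℝ | MvPolynomial.eval y g ≤ 1} := by
    simp only [Set.mem_setOf_eq, homog_eval_smul hg]
    nlinarith [pow_pos htpos d]
  have := hR hmem
  rw [Metric.mem_ball, dist_zero_right, norm_smul, Real.norm_eq_abs, abs_of_pos htpos] at this
  rw [ht, div_mul_cancel₀ _ hxn.ne'] at this
  nlinarith [abs_nonneg R, le_abs_self R]

lemma homog_scale_integral {n d k : ℕ} (hd : 0 < d)
    {g p : MvPolynomial (Fin n) ℝ} (hg : g.IsHomogeneous d) (hp : p.IsHomogeneous k)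
    {s : ℝ} (hs : 0 < s) :
    ∫ x in {x : Fin n → ℝ | MvPolynomial.eval x g ≤ s}, MvPolynomial.eval x p =
      s ^ (((n : ℝ) + k) / d) *
        ∫ x in {x : Fin n → ℝ | MvPolynomial.eval x g ≤ 1}, MvPolynomial.eval x p := by
  set K := {x : Fin n → ℝ | MvPolynomial.eval x g ≤ 1}
  set r : ℝ := s ^ ((1 : ℝ) / d) with hrdef
  have hr : 0 < r := Real.rpow_pos_of_pos hs _
  have hrd : r ^ d = s := by
    rw [hrdef, ← Real.rpow_natCast (s ^ ((1:ℝ)/d)) d, ← Real.rpow_mul hs.le,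
      one_div_mul_cancel (by exact_mod_cast hd.ne' : (d:ℝ) ≠ 0), Real.rpow_one]
  have hset : r • K = {x : Fin n → ℝ | MvPolynomial.eval x g ≤ s} := by
    ext x
    rw [Set.mem_smul_set_iff_inv_smul_mem₀ hr.ne']
    simp only [K, Set.mem_setOf_eq, homog_eval_smul hg]
    rw [inv_pow, inv_mul_le_iff₀ (pow_pos hr d), mul_one, hrd]
  have h1 : ∫ x in K, MvPolynomial.eval (r • x) p =
      (r ^ Module.finrank ℝ (Fin n → ℝ))⁻¹ •
        ∫ x in r • K, MvPolynomial.eval x p :=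
    Measure.setIntegral_comp_smul_of_pos volume (fun x => MvPolynomial.eval x p) K hr
  have h2 : ∫ x in K, MvPolynomial.eval (r • x) p = r ^ k * ∫ x in K, MvPolynomial.eval x p := by
    rw [← integral_const_mul]
    exact setIntegral_congr_fun
      ((isClosed_le (MvPolynomial.continuous_eval _) continuous_const).measurableSet)
      (fun x _ => homog_eval_smul hp r x)
  rw [hset, Module.finrank_fin_fun] at h1
  have hrn : (0:ℝ) < r ^ n := pow_pos hr n
  have : ∫ x in {x : Fin n → ℝ | MvPolynomial.eval x g ≤ s}, MvPolynomial.eval x p =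
      r ^ n * (r ^ k * ∫ x in K, MvPolynomial.eval x p) := by
    rw [← h2, h1, smul_eq_mul, ← mul_assoc, mul_inv_cancel₀ hrn.ne', one_mul]
  rw [this, ← mul_assoc, ← pow_add]
  congr 1
  rw [hrdef, ← Real.rpow_natCast (s ^ ((1:ℝ)/d)) (n+k), ← Real.rpow_mul hs.le]
  congr 1
  push_cast
  ring

lemma homog_moment_identity {n d k : ℕ} (hd : 0 < d)
    {g p : MvPolynomial (Fin n) ℝ} (hg : g.IsHomogeneous d) (hp : p.IsHomogeneous k)
    (hK : IsCompact {x : Fin n → ℝ | MvPolynomial.eval x g ≤ 1}) :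
    ∫ x in {x : Fin n → ℝ | MvPolynomial.eval x g ≤ 1},
        MvPolynomial.eval x p * MvPolynomial.eval x g =
      (((n : ℝ) + k) / ((n : ℝ) + k + d)) *
        ∫ x in {x : Fin n → ℝ | MvPolynomial.eval x g ≤ 1}, MvPolynomial.eval x p := by
  set G : (Fin n → ℝ) → ℝ := fun x => MvPolynomial.eval x g with hGdef
  set P : (Fin n → ℝ) → ℝ := fun x => MvPolynomial.eval x p with hPdef
  set K : Set (Fin n → ℝ) := {x | G x ≤ 1} with hKdef
  have hGc : Continuous G := MvPolynomial.continuous_eval _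
  have hPc : Continuous P := MvPolynomial.continuous_eval _
  have hKm : MeasurableSet K := (isClosed_le hGc continuous_const).measurableSet
  have hG0 : ∀ x, 0 ≤ G x := homog_nonneg hd hg hK
  have hPK : IntegrableOn P K := hPc.continuousOn.integrableOn_compact hK
  set μ : Measure (Fin n → ℝ) := volume.restrict K with hμdef
  set ν : Measure ℝ := volume.restrict (Set.Ioo (0:ℝ) 1) with hνdef
  haveI : IsFiniteMeasure μ := ⟨by rw [Measure.restrict_apply_univ]; exact hK.measure_lt_top⟩
  haveI : IsFiniteMeasure ν := ⟨by rw [Measure.restrict_apply_univ]; exact measure_Ioo_lt_top⟩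
  set S : Set ((Fin n → ℝ) × ℝ) := {q | q.2 < G q.1} with hSdef
  have hSo : IsOpen S := isOpen_lt continuous_snd (hGc.comp continuous_fst)
  set F : (Fin n → ℝ) × ℝ → ℝ := S.indicator (fun q => P q.1) with hFdef
  have hFm : StronglyMeasurable F :=
    ((hPc.comp continuous_fst).stronglyMeasurable).indicator hSo.measurableSet
  set A : ℝ := ∫ x in K, P x with hAdef
  set a : ℝ := ((n : ℝ) + k) / d with hadef
  have ha0 : 0 ≤ a := by positivity
  -- integrability on the product
  have hFi : Integrable F (μ.prod ν) := by
    obtain ⟨C, hC⟩ := hK.exists_bound_of_continuousOn hPc.continuousOn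
    refine Integrable.mono' (integrable_const (max C 0)) hFm.aestronglyMeasurable ?_
    rw [hμdef, hνdef, Measure.prod_restrict]
    filter_upwards [ae_restrict_mem (hKm.prod measurableSet_Ioo)] with q hq
    rcases Set.mem_prod.mp hq with ⟨hq1, -⟩
    by_cases hqS : q ∈ S
    · rw [hFdef, Set.indicator_of_mem hqS]
      exact le_max_of_le_left (hC _ hq1)
    · rw [hFdef, Set.indicator_of_notMem hqS]
      simp
  have hswap := integral_integral_swap (f := fun x t => F (x, t)) hFi
  -- left side
  have hleft : ∫ x, (∫ t, F (x, t) ∂ν) ∂μ = ∫ x in K, P x * G x := by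
    refine setIntegral_congr_fun hKm fun x hx => ?_
    have h1 : (fun t => F (x, t)) = (Set.Iio (G x)).indicator (fun _ => P x) := by
      ext t
      by_cases h : t < G x <;>
        simp [hFdef, hSdef, Set.indicator_apply, Set.mem_Iio, h]
    rw [h1, hνdef]
    rw [setIntegral_indicator measurableSet_Iio]
    have h2 : Set.Ioo (0:ℝ) 1 ∩ Set.Iio (G x) = Set.Ioo 0 (G x) := by
      ext t
      simp only [Set.mem_inter_iff, Set.mem_Ioo, Set.mem_Iio]
      exact ⟨fun h => ⟨h.1.1, h.2⟩, fun h => ⟨⟨h.1, lt_of_lt_of_le h.2 hx⟩, h.2⟩⟩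
    rw [h2, setIntegral_const, Real.volume_real_Ioo_of_le (hG0 x), sub_zero,
      smul_eq_mul, mul_comm]
  -- right side
  have hright : ∫ t, (∫ x, F (x, t) ∂μ) ∂ν = ∫ t in Set.Ioo (0:ℝ) 1, (A - t ^ a * A) := by
    rw [hνdef]
    refine setIntegral_congr_fun measurableSet_Ioo fun t ht => ?_
    have h1 : (fun x => F (x, t)) = ({x | t < G x}).indicator P := by
      ext x
      by_cases h : t < G x <;>
        simp [hFdef, hSdef, Set.indicator_apply, h]
    rw [hμdef, h1, setIntegral_indicator (isOpen_lt continuous_const hGc).measurableSet]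
    have hsub : {x | G x ≤ t} ⊆ K := fun x hx => le_trans hx ht.2.le
    have hunion : K = {x | G x ≤ t} ∪ (K ∩ {x | t < G x}) := by
      ext x
      constructor
      · intro hx
        by_cases h : G x ≤ t
        · exact Or.inl h
        · exact Or.inr ⟨hx, lt_of_not_ge h⟩
      · rintro (h | h)
        · exact hsub h
        · exact h.1
    have hdisj : Disjoint {x | G x ≤ t} (K ∩ {x | t < G x}) := by
      rw [Set.disjoint_left]
      rintro x hx ⟨-, hx2⟩
      simp only [Set.mem_setOf_eq] at hx
      exact absurd hx (not_le.mpr hx2)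
    have hsum : A = (∫ x in {x | G x ≤ t}, P x) + ∫ x in K ∩ {x | t < G x}, P x := by
      rw [hAdef]
      conv_lhs => rw [hunion]
      exact setIntegral_union hdisj (hKm.inter (isOpen_lt continuous_const hGc).measurableSet)
        (hPK.mono_set hsub) (hPK.mono_set Set.inter_subset_left)
    have hscale : ∫ x in {x | G x ≤ t}, P x = t ^ a * A :=
      homog_scale_integral hd hg hp ht.1
    rw [hscale] at hsum
    linarith
  -- compute the elementary integral
  have hcalc : ∫ t in Set.Ioo (0:ℝ) 1, (A - t ^ a * A) = (((n:ℝ)+k) / ((n:ℝ)+k+d)) * A := by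
    rw [← integral_Ioc_eq_integral_Ioo, ← intervalIntegral.integral_of_le zero_le_one]
    have hi1 : IntervalIntegrable (fun _ : ℝ => A) volume 0 1 := intervalIntegrable_const
    have hi2 : IntervalIntegrable (fun t : ℝ => t ^ a * A) volume 0 1 :=
      (intervalIntegral.intervalIntegrable_rpow (Or.inl ha0)).mul_const A
    rw [intervalIntegral.integral_sub hi1 hi2, intervalIntegral.integral_const,
      intervalIntegral.integral_mul_const,
      integral_rpow (Or.inl (by linarith : (-1:ℝ) < a))]
    have hd' : (0:ℝ) < d := by exact_mod_cast hd
    have ha1 : a + 1 ≠ 0 := by positivity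
    rw [Real.one_rpow, Real.zero_rpow ha1]
    have : a + 1 = ((n:ℝ) + k + d) / d := by
      rw [hadef]; field_simp
    rw [this]
    have hnkd : (0:ℝ) < (n:ℝ) + k + d := by positivity
    field_simp
    ring
  rw [← hleft, hswap, hright, hcalc]

lemma moment_transfer {n d : ℕ} {K₁ K₂ : Set (Fin n → ℝ)}
    (hK₁ : IsCompact K₁) (hK₂ : IsCompact K₂)
    (hmom : ∀ α : Fin n → ℕ, ((∑ i, α i) = d ∨ (∑ i, α i) = 2 * d) →
      ∫ x in K₁, ∏ i, x i ^ α i = ∫ x in K₂, ∏ i, x i ^ α i)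
    {q : MvPolynomial (Fin n) ℝ} {m : ℕ} (hq : q.IsHomogeneous m)
    (hm : m = d ∨ m = 2 * d) :
    ∫ x in K₁, MvPolynomial.eval x q = ∫ x in K₂, MvPolynomial.eval x q := by
  have key : ∀ K : Set (Fin n → ℝ), IsCompact K →
      ∫ x in K, MvPolynomial.eval x q =
        ∑ α ∈ q.support, MvPolynomial.coeff α q * ∫ x in K, ∏ i, x i ^ α i := by
    intro K hK
    have : ∀ x : Fin n → ℝ, MvPolynomial.eval x q =
        ∑ α ∈ q.support, MvPolynomial.coeff α q * ∏ i, x i ^ α i :=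
      fun x => MvPolynomial.eval_eq' x q
    rw [integral_congr_ae (Filter.Eventually.of_forall this)]
    rw [integral_finset_sum]
    · exact Finset.sum_congr rfl fun α _ => integral_const_mul _ _
    · intro α _
      exact (continuous_const.mul
        (continuous_finset_prod _ fun i _ => (continuous_apply i).pow (α i))
        ).continuousOn.integrableOn_compact hK
  rw [key K₁ hK₁, key K₂ hK₂]
  refine Finset.sum_congr rfl fun α hα => ?_
  congr 1
  apply hmom
  have hdeg : ∑ i, (α : Fin n → ℕ) i = m := by
    have := hq (MvPolynomial.mem_support_iff.mp hα)
    rw [Finsupp.weight_apply, Finsupp.sum_fintype] at this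
    · simpa using this
    · intro i; simp
  rw [hdeg]; exact hm

/-- Uniqueness: two homogeneous polynomials of the same degree `d` with compact
sublevel sets whose Lebesgue moments of orders `d` and `2d` coincide must be equal. -/
theorem eq_of_moments_eq (n d : ℕ) (hn : 0 < n) (hd : 0 < d)
    (g₁ g₂ : MvPolynomial (Fin n) ℝ)
    (hg₁ : g₁.IsHomogeneous d) (hg₂ : g₂.IsHomogeneous d)
    (hK₁ : IsCompact {x : Fin n → ℝ | MvPolynomial.eval x g₁ ≤ 1})
    (hK₂ : IsCompact {x : Fin n → ℝ | MvPolynomial.eval x g₂ ≤ 1})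
    (hmom : ∀ α : Fin n → ℕ, ((∑ i, α i) = d ∨ (∑ i, α i) = 2 * d) →
      ∫ x in {x : Fin n → ℝ | MvPolynomial.eval x g₁ ≤ 1}, ∏ i, x i ^ α i =
      ∫ x in {x : Fin n → ℝ | MvPolynomial.eval x g₂ ≤ 1}, ∏ i, x i ^ α i) :
    g₁ = g₂ := by
  set K₁ := {x : Fin n → ℝ | MvPolynomial.eval x g₁ ≤ 1} with hK₁def
  set K₂ := {x : Fin n → ℝ | MvPolynomial.eval x g₂ ≤ 1} with hK₂def
  set h := g₁ - g₂ with hhdef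
  have hh : h.IsHomogeneous d := hg₁.sub hg₂
  have hHc : Continuous fun x : Fin n → ℝ => MvPolynomial.eval x h :=
    MvPolynomial.continuous_eval _
  set c : ℝ := ((n : ℝ) + d) / ((n : ℝ) + d + d) with hcdef
  set A : ℝ := ∫ x in K₁, MvPolynomial.eval x h with hAdef
  -- moment transfers
  have eA : ∫ x in K₂, MvPolynomial.eval x h = A :=
    (moment_transfer hK₁ hK₂ hmom hh (Or.inl rfl)).symm
  have i1 : ∫ x in K₁, MvPolynomial.eval x h * MvPolynomial.eval x g₁ = c * A :=
    homog_moment_identity hd hg₁ hh hK₁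
  have i2 : ∫ x in K₂, MvPolynomial.eval x h * MvPolynomial.eval x g₂ = c * A := by
    rw [homog_moment_identity hd hg₂ hh hK₂, eA]
  have i3 : ∫ x in K₁, MvPolynomial.eval x h * MvPolynomial.eval x g₂ = c * A := by
    have hmul : (h * g₂).IsHomogeneous (d + d) := hh.mul hg₂
    have := moment_transfer hK₁ hK₂ hmom hmul (Or.inr (two_mul d).symm)
    simp only [map_mul] at this
    rw [this, i2]
  -- the square integrates to zero on K₁
  have hint1 : IntegrableOn (fun x => MvPolynomial.eval x h * MvPolynomial.eval x g₁) K₁ :=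
    ((hHc.mul (MvPolynomial.continuous_eval _)).continuousOn).integrableOn_compact hK₁
  have hint2 : IntegrableOn (fun x => MvPolynomial.eval x h * MvPolynomial.eval x g₂) K₁ :=
    ((hHc.mul (MvPolynomial.continuous_eval _)).continuousOn).integrableOn_compact hK₁
  have hsq : ∫ x in K₁, (MvPolynomial.eval x h) ^ 2 = 0 := by
    have hpt : ∀ x : Fin n → ℝ, (MvPolynomial.eval x h) ^ 2 =
        MvPolynomial.eval x h * MvPolynomial.eval x g₁ -
          MvPolynomial.eval x h * MvPolynomial.eval x g₂ := by
      intro x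
      have : MvPolynomial.eval x h = MvPolynomial.eval x g₁ - MvPolynomial.eval x g₂ := by
        rw [hhdef, map_sub]
      rw [this]; ring
    rw [integral_congr_ae (Filter.Eventually.of_forall hpt), integral_sub hint1 hint2, i1, i3,
      sub_self]
  have hsqint : IntegrableOn (fun x => (MvPolynomial.eval x h) ^ 2) K₁ :=
    ((hHc.pow 2).continuousOn).integrableOn_compact hK₁
  have hae : (fun x => (MvPolynomial.eval x h) ^ 2) =ᶠ[ae (volume.restrict K₁)] 0 :=
    (integral_eq_zero_iff_of_nonneg (fun x => sq_nonneg _) hsqint).mp hsq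
  -- a ball around 0 inside K₁
  have h0 : MvPolynomial.eval (0 : Fin n → ℝ) g₁ = 0 := by
    have := homog_eval_smul hg₁ 0 0
    rwa [smul_zero, zero_pow hd.ne', zero_mul] at this
  have hopen : IsOpen {x : Fin n → ℝ | MvPolynomial.eval x g₁ < 1} :=
    isOpen_lt (MvPolynomial.continuous_eval _) continuous_const
  obtain ⟨ε, hε, hball⟩ := Metric.isOpen_iff.mp hopen 0 (by simp only [Set.mem_setOf_eq, h0]; norm_num)
  have hballK : Metric.ball (0 : Fin n → ℝ) ε ⊆ K₁ :=
    fun x hx => show MvPolynomial.eval x g₁ ≤ 1 from le_of_lt (hball hx)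
  -- h vanishes on the ball
  have hvanish : ∀ y ∈ Metric.ball (0 : Fin n → ℝ) ε, MvPolynomial.eval y h = 0 := by
    intro y hy
    by_contra hy0
    set U := Metric.ball (0 : Fin n → ℝ) ε ∩ {x | MvPolynomial.eval x h ≠ 0} with hUdef
    have hUo : IsOpen U := Metric.isOpen_ball.inter (isOpen_compl_singleton.preimage hHc)
    have hUne : U.Nonempty := ⟨y, hy, hy0⟩
    have hUpos : 0 < volume U := hUo.measure_pos volume hUne
    set N := {x : Fin n → ℝ | (MvPolynomial.eval x h) ^ 2 ≠ 0} with hNdef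
    have hNm : MeasurableSet N :=
      (isOpen_compl_singleton.preimage (hHc.pow 2)).measurableSet
    have hN0 : volume.restrict K₁ N = 0 := by
      have := hae
      rw [Filter.EventuallyEq, ae_iff] at this
      simpa [hNdef] using this
    have hNK : volume (N ∩ K₁) = 0 := by
      rwa [Measure.restrict_apply hNm] at hN0
    have hUsub : U ⊆ N ∩ K₁ := by
      rintro x ⟨hx1, hx2⟩
      exact ⟨pow_ne_zero 2 hx2, hballK hx1⟩
    exact absurd (measure_mono_null hUsub hNK) hUpos.ne'
  -- h vanishes everywhere by homogeneity
  have hzero : ∀ x : Fin n → ℝ, MvPolynomial.eval x h = 0 := by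
    intro x
    set t : ℝ := ε / (2 * (‖x‖ + 1)) with htdef
    have hxn : (0:ℝ) ≤ ‖x‖ := norm_nonneg x
    have htpos : 0 < t := by positivity
    have hmem : t • x ∈ Metric.ball (0 : Fin n → ℝ) ε := by
      rw [Metric.mem_ball, dist_zero_right, norm_smul, Real.norm_eq_abs, abs_of_pos htpos]
      rw [htdef, div_mul_eq_mul_div, div_lt_iff₀ (by positivity)]
      nlinarith
    have := hvanish _ hmem
    rw [homog_eval_smul hh] at this
    have htd : t ^ d ≠ 0 := pow_ne_zero d htpos.ne'
    exact (mul_eq_zero.mp this).resolve_left htd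
  have : h = 0 := hh.eq_zero_of_forall_eval_eq_zero hzero
  rw [hhdef, sub_eq_zero] at this
  exact this
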